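/- arXiv:1604.00217 — 2 statements merged into one kernel-verified Lean document; each statement's English description precedes it below -/
import Mathlib

section
/- Let P, Q be positive definite n×n matrices, R^i > 0 positive scalars, and let ω^i(z, y) = 1 if (z - τ^i)·y < 0 and 0 otherwise. Then the cost J(x̂_{0}, ..., x̂_{N}) = ‖x̂_0 - x̄‖²_P + Σ_{k=0}^{N-1} ‖x̂_{k+1} - A x̂_k - B u_k‖²_Q + Σ_{i=1}^{p} Σ_{k=0}^{N} ω^i(C^i x̂_k, y_k^i)·R^i·(C^i x̂_k - τ^i)² is strictly convex as a function of (x̂_0, ..., x̂_N) ∈ (ℝⁿ)^{N+1}, and hence has a unique global minimizer. -/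
open Matrix


-- quadratic form combination lemmas
lemma quad_key {n : ℕ} (M : Matrix (Fin n) (Fin n) ℝ) (x y : Fin n → ℝ) (a b : ℝ) (hab : a + b = 1) :
    (a * (x ⬝ᵥ M.mulVec x) + b * (y ⬝ᵥ M.mulVec y)) - ((a • x + b • y) ⬝ᵥ M.mulVec (a • x + b • y))
      = a * b * ((x - y) ⬝ᵥ M.mulVec (x - y)) := by
  have hb : b = 1 - a := by linarith
  subst hb
  simp only [mulVec_add, mulVec_smul, mulVec_sub, add_dotProduct, sub_dotProduct,
    smul_dotProduct, dotProduct_add, dotProduct_sub, dotProduct_smul, smul_eq_mul]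
  ring

lemma quad_le {n : ℕ} (M : Matrix (Fin n) (Fin n) ℝ) (hM : M.PosDef) (x y : Fin n → ℝ)
    {a b : ℝ} (ha : 0 ≤ a) (hb : 0 ≤ b) (hab : a + b = 1) :
    (a • x + b • y) ⬝ᵥ M.mulVec (a • x + b • y) ≤ a * (x ⬝ᵥ M.mulVec x) + b * (y ⬝ᵥ M.mulVec y) := by
  have key := quad_key M x y a b hab
  have hnn : 0 ≤ (x - y) ⬝ᵥ M.mulVec (x - y) := by
    rcases eq_or_ne (x - y) 0 with h | h
    · simp [h]
    · have := hM.dotProduct_mulVec_pos h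
      simpa using this.le
  nlinarith [mul_nonneg ha hb]

lemma quad_lt {n : ℕ} (M : Matrix (Fin n) (Fin n) ℝ) (hM : M.PosDef) {x y : Fin n → ℝ}
    (hxy : x ≠ y) {a b : ℝ} (ha : 0 < a) (hb : 0 < b) (hab : a + b = 1) :
    (a • x + b • y) ⬝ᵥ M.mulVec (a • x + b • y) < a * (x ⬝ᵥ M.mulVec x) + b * (y ⬝ᵥ M.mulVec y) := by
  have key := quad_key M x y a b hab
  have hpos : 0 < (x - y) ⬝ᵥ M.mulVec (x - y) := by
    have := hM.dotProduct_mulVec_pos (sub_ne_zero.2 hxy)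
    simpa using this
  nlinarith [mul_pos ha hb]

lemma pen_eq {R τ yv t : ℝ} (hy : yv = 1 ∨ yv = -1) :
    (if (t - τ) * yv < 0 then (1:ℝ) else 0) * R * (t - τ) ^ 2
      = R * (max ((τ - t) * yv) 0) ^ 2 := by
  rcases hy with h | h <;> subst h <;> rcases lt_trichotomy t τ with h | h | h
  · rw [if_pos (by nlinarith), max_eq_left (by nlinarith)]; ring
  · subst h; simp
  · rw [if_neg (by nlinarith), max_eq_right (by nlinarith)]; ring
  · rw [if_neg (by nlinarith), max_eq_right (by nlinarith)]; ring
  · subst h; simp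
  · rw [if_pos (by nlinarith), max_eq_left (by nlinarith)]; ring

lemma gmax_le (R : ℝ) (hR : 0 ≤ R) {a b s t : ℝ} (ha : 0 ≤ a) (hb : 0 ≤ b) (hab : a + b = 1) :
    R * (max (a * s + b * t) 0) ^ 2 ≤ a * (R * (max s 0) ^ 2) + b * (R * (max t 0) ^ 2) := by
  set S := max s 0 with hS
  set T := max t 0 with hT
  have hS0 : 0 ≤ S := le_max_right _ _
  have hT0 : 0 ≤ T := le_max_right _ _
  have hsS : s ≤ S := le_max_left _ _
  have htT : t ≤ T := le_max_left _ _
  have h1 : max (a * s + b * t) 0 ≤ a * S + b * T := by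
    apply max_le
    · have := mul_le_mul_of_nonneg_left hsS ha
      have := mul_le_mul_of_nonneg_left htT hb
      linarith
    · positivity
  have h2 : (max (a * s + b * t) 0) ^ 2 ≤ (a * S + b * T) ^ 2 := by
    apply pow_le_pow_left₀ (le_max_right _ _) h1
  have h3 : (a * S + b * T) ^ 2 ≤ a * S ^ 2 + b * T ^ 2 := by
    nlinarith [sq_nonneg (S - T), mul_nonneg ha hb]
  nlinarith

lemma pen_nonneg {c : Prop} [Decidable c] {R t : ℝ} (hR : 0 ≤ R) :
    0 ≤ (if c then (1:ℝ) else 0) * R * t ^ 2 := by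
  split_ifs <;> positivity

lemma cont_dot {n : ℕ} (c : Fin n → ℝ) : Continuous fun v : Fin n → ℝ => c ⬝ᵥ v := by
  unfold dotProduct
  exact continuous_finset_sum _ fun j _ => continuous_const.mul (continuous_apply j)

lemma cont_mulVec {n m : ℕ} (M : Matrix (Fin n) (Fin m) ℝ) :
    Continuous fun v : Fin m → ℝ => M.mulVec v :=
  continuous_pi fun i => cont_dot (M i)

lemma cont_quad {n : ℕ} (M : Matrix (Fin n) (Fin n) ℝ) :
    Continuous fun v : Fin n → ℝ => v ⬝ᵥ M.mulVec v := by
  unfold dotProduct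
  exact continuous_finset_sum _ fun j _ =>
    (continuous_apply j).mul ((continuous_apply j).comp (cont_mulVec M))

lemma posdef_bound {n : ℕ} (M : Matrix (Fin n) (Fin n) ℝ) (hM : M.PosDef) :
    ∃ ε > 0, ∀ v : Fin n → ℝ, ε * ‖v‖ ^ 2 ≤ v ⬝ᵥ M.mulVec v := by
  rcases Nat.eq_zero_or_pos n with hn | hn
  · refine ⟨1, one_pos, fun v => ?_⟩
    subst hn
    have hv : v = 0 := funext fun i => absurd i.2 (by omega)
    rw [hv, norm_zero]
    simp [dotProduct]
  · have hne : (Metric.sphere (0 : Fin n → ℝ) 1).Nonempty := by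
      have : Nontrivial (Fin n → ℝ) := by
        have : Nonempty (Fin n) := ⟨⟨0, hn⟩⟩
        infer_instance
      exact NormedSpace.sphere_nonempty.2 zero_le_one
    obtain ⟨w, hw, hwmin⟩ := (isCompact_sphere (0 : Fin n → ℝ) 1).exists_isMinOn hne
      (cont_quad M).continuousOn
    have hw1 : ‖w‖ = 1 := by simpa using hw
    have hw0 : w ≠ 0 := by intro h; rw [h] at hw1; simp at hw1
    have hε : 0 < w ⬝ᵥ M.mulVec w := by simpa using hM.dotProduct_mulVec_pos hw0
    refine ⟨w ⬝ᵥ M.mulVec w, hε, fun v => ?_⟩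
    rcases eq_or_ne v 0 with rfl | hv
    · simp
    · have hnv : 0 < ‖v‖ := norm_pos_iff.2 hv
      set c := ‖v‖
      have hmem : (c⁻¹ • v) ∈ Metric.sphere (0 : Fin n → ℝ) 1 := by
        have : ‖c⁻¹ • v‖ = 1 := by
          rw [norm_smul, norm_inv, Real.norm_eq_abs, abs_of_pos hnv]
          exact inv_mul_cancel₀ hnv.ne'
        simpa [mem_sphere_zero_iff_norm] using this
      have hmin := hwmin hmem
      have hexp : (c⁻¹ • v) ⬝ᵥ M.mulVec (c⁻¹ • v) = c⁻¹ * c⁻¹ * (v ⬝ᵥ M.mulVec v) := by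
        simp [mulVec_smul, dotProduct_smul, smul_dotProduct, smul_eq_mul]; ring
      have : w ⬝ᵥ M.mulVec w ≤ c⁻¹ * c⁻¹ * (v ⬝ᵥ M.mulVec v) := by
        simpa [hexp] using hmin
      have hc2 : 0 < c ^ 2 := by positivity
      calc (w ⬝ᵥ M.mulVec w) * ‖v‖ ^ 2 = (w ⬝ᵥ M.mulVec w) * c ^ 2 := rfl
        _ ≤ (c⁻¹ * c⁻¹ * (v ⬝ᵥ M.mulVec v)) * c ^ 2 := by nlinarith
        _ = (v ⬝ᵥ M.mulVec v) * (c⁻¹ * c) ^ 2 := by ring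
        _ = v ⬝ᵥ M.mulVec v := by rw [inv_mul_cancel₀ hnv.ne']; ring

lemma find_strict {n N : ℕ} {X Y : Fin (N + 1) → Fin n → ℝ} (hXY : X ≠ Y) :
    X 0 ≠ Y 0 ∨ ∃ k : Fin N, X k.castSucc = Y k.castSucc ∧ X k.succ ≠ Y k.succ := by
  by_contra h
  push_neg at h
  obtain ⟨h0, hstep⟩ := h
  apply hXY
  funext j
  induction j using Fin.induction with
  | zero => exact h0
  | succ k ih => exact hstep k ih

lemma assemble {c1 c2 c3 x1 x2 x3 y1 y2 y3 a b : ℝ}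
    (h1 : c1 ≤ a * x1 + b * y1) (h2 : c2 ≤ a * x2 + b * y2) (h3 : c3 ≤ a * x3 + b * y3)
    (hs : c1 < a * x1 + b * y1 ∨ c2 < a * x2 + b * y2) :
    c1 + c2 + c3 < a * (x1 + x2 + x3) + b * (y1 + y2 + y3) := by
  have he : a * (x1 + x2 + x3) + b * (y1 + y2 + y3)
      = (a * x1 + b * y1) + (a * x2 + b * y2) + (a * x3 + b * y3) := by ring
  rw [he]
  rcases hs with h | h <;> linarith

theorem stmt_5 {n m p N : ℕ}
    (P Q : Matrix (Fin n) (Fin n) ℝ) (hP : P.PosDef) (hQ : Q.PosDef)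
    (R : Fin p → ℝ) (hR : ∀ i, 0 < R i)
    (A : Matrix (Fin n) (Fin n) ℝ) (B : Matrix (Fin n) (Fin m) ℝ)
    (C : Fin p → (Fin n → ℝ)) (τ : Fin p → ℝ)
    (xbar : Fin n → ℝ) (u : Fin N → (Fin m → ℝ))
    (y : Fin (N + 1) → Fin p → ℝ) (hy : ∀ k i, y k i = 1 ∨ y k i = -1) :
    StrictConvexOn ℝ Set.univ
      (fun X : Fin (N + 1) → (Fin n → ℝ) =>
        (X 0 - xbar) ⬝ᵥ P.mulVec (X 0 - xbar)
        + ∑ k : Fin N,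
            (X k.succ - A.mulVec (X k.castSucc) - B.mulVec (u k)) ⬝ᵥ
              Q.mulVec (X k.succ - A.mulVec (X k.castSucc) - B.mulVec (u k))
        + ∑ i : Fin p, ∑ k : Fin (N + 1),
            (if (C i ⬝ᵥ X k - τ i) * y k i < 0 then (1 : ℝ) else 0) * R i *
              (C i ⬝ᵥ X k - τ i) ^ 2) ∧
    ∃! Xo : Fin (N + 1) → (Fin n → ℝ),
      IsMinOn
        (fun X : Fin (N + 1) → (Fin n → ℝ) =>
          (X 0 - xbar) ⬝ᵥ P.mulVec (X 0 - xbar)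
          + ∑ k : Fin N,
              (X k.succ - A.mulVec (X k.castSucc) - B.mulVec (u k)) ⬝ᵥ
                Q.mulVec (X k.succ - A.mulVec (X k.castSucc) - B.mulVec (u k))
          + ∑ i : Fin p, ∑ k : Fin (N + 1),
              (if (C i ⬝ᵥ X k - τ i) * y k i < 0 then (1 : ℝ) else 0) * R i *
                (C i ⬝ᵥ X k - τ i) ^ 2)
        Set.univ Xo := by
  classical
  set f : (Fin (N + 1) → (Fin n → ℝ)) → ℝ := fun X =>
        (X 0 - xbar) ⬝ᵥ P.mulVec (X 0 - xbar)
        + ∑ k : Fin N,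
            (X k.succ - A.mulVec (X k.castSucc) - B.mulVec (u k)) ⬝ᵥ
              Q.mulVec (X k.succ - A.mulVec (X k.castSucc) - B.mulVec (u k))
        + ∑ i : Fin p, ∑ k : Fin (N + 1),
            (if (C i ⬝ᵥ X k - τ i) * y k i < 0 then (1 : ℝ) else 0) * R i *
              (C i ⬝ᵥ X k - τ i) ^ 2 with hfdef
  have hsc : StrictConvexOn ℝ Set.univ f := by
    refine ⟨convex_univ, ?_⟩
    intro X _ Y _ hXY a b ha hb hab
    simp only [hfdef, smul_eq_mul]
    -- identities
    have e0 : (a • X + b • Y) 0 - xbar = a • (X 0 - xbar) + b • (Y 0 - xbar) := by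
      funext j
      simp only [Pi.add_apply, Pi.smul_apply, Pi.sub_apply, smul_eq_mul]
      linear_combination (xbar j) * hab
    have ez : ∀ k : Fin N,
        (a • X + b • Y) k.succ - A.mulVec ((a • X + b • Y) k.castSucc) - B.mulVec (u k)
          = a • (X k.succ - A.mulVec (X k.castSucc) - B.mulVec (u k))
            + b • (Y k.succ - A.mulVec (Y k.castSucc) - B.mulVec (u k)) := by
      intro k
      have hc : (a • X + b • Y) k.castSucc = a • X k.castSucc + b • Y k.castSucc := rfl
      rw [hc, mulVec_add, mulVec_smul, mulVec_smul]
      funext j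
      simp only [Pi.add_apply, Pi.smul_apply, Pi.sub_apply, smul_eq_mul]
      linear_combination (B.mulVec (u k) j) * hab
    -- bounds
    have H1le : ((a • X + b • Y) 0 - xbar) ⬝ᵥ P.mulVec ((a • X + b • Y) 0 - xbar)
        ≤ a * ((X 0 - xbar) ⬝ᵥ P.mulVec (X 0 - xbar))
          + b * ((Y 0 - xbar) ⬝ᵥ P.mulVec (Y 0 - xbar)) := by
      rw [e0]; exact quad_le P hP _ _ ha.le hb.le hab
    have H2term : ∀ k : Fin N,
        ((a • X + b • Y) k.succ - A.mulVec ((a • X + b • Y) k.castSucc) - B.mulVec (u k)) ⬝ᵥ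
            Q.mulVec ((a • X + b • Y) k.succ - A.mulVec ((a • X + b • Y) k.castSucc) - B.mulVec (u k))
          ≤ a * ((X k.succ - A.mulVec (X k.castSucc) - B.mulVec (u k)) ⬝ᵥ
                Q.mulVec (X k.succ - A.mulVec (X k.castSucc) - B.mulVec (u k)))
            + b * ((Y k.succ - A.mulVec (Y k.castSucc) - B.mulVec (u k)) ⬝ᵥ
                Q.mulVec (Y k.succ - A.mulVec (Y k.castSucc) - B.mulVec (u k))) := by
      intro k
      rw [ez k]; exact quad_le Q hQ _ _ ha.le hb.le hab
    have H2le : (∑ k : Fin N,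
        ((a • X + b • Y) k.succ - A.mulVec ((a • X + b • Y) k.castSucc) - B.mulVec (u k)) ⬝ᵥ
            Q.mulVec ((a • X + b • Y) k.succ - A.mulVec ((a • X + b • Y) k.castSucc) - B.mulVec (u k)))
          ≤ a * (∑ k : Fin N, (X k.succ - A.mulVec (X k.castSucc) - B.mulVec (u k)) ⬝ᵥ
                Q.mulVec (X k.succ - A.mulVec (X k.castSucc) - B.mulVec (u k)))
            + b * (∑ k : Fin N, (Y k.succ - A.mulVec (Y k.castSucc) - B.mulVec (u k)) ⬝ᵥ
                Q.mulVec (Y k.succ - A.mulVec (Y k.castSucc) - B.mulVec (u k))) := by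
      calc _ ≤ ∑ k : Fin N,
          (a * ((X k.succ - A.mulVec (X k.castSucc) - B.mulVec (u k)) ⬝ᵥ
                Q.mulVec (X k.succ - A.mulVec (X k.castSucc) - B.mulVec (u k)))
            + b * ((Y k.succ - A.mulVec (Y k.castSucc) - B.mulVec (u k)) ⬝ᵥ
                Q.mulVec (Y k.succ - A.mulVec (Y k.castSucc) - B.mulVec (u k)))) :=
            Finset.sum_le_sum fun k _ => H2term k
        _ = _ := by rw [Finset.sum_add_distrib, ← Finset.mul_sum, ← Finset.mul_sum]
    have hpen : ∀ (i : Fin p) (k : Fin (N + 1)),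
        (if (C i ⬝ᵥ (a • X + b • Y) k - τ i) * y k i < 0 then (1:ℝ) else 0) * R i *
            (C i ⬝ᵥ (a • X + b • Y) k - τ i) ^ 2
          ≤ a * ((if (C i ⬝ᵥ X k - τ i) * y k i < 0 then (1:ℝ) else 0) * R i *
                (C i ⬝ᵥ X k - τ i) ^ 2)
            + b * ((if (C i ⬝ᵥ Y k - τ i) * y k i < 0 then (1:ℝ) else 0) * R i *
                (C i ⬝ᵥ Y k - τ i) ^ 2) := by
      intro i k
      rw [pen_eq (hy k i), pen_eq (hy k i), pen_eq (hy k i)]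
      have harg : (τ i - C i ⬝ᵥ (a • X + b • Y) k) * y k i
          = a * ((τ i - C i ⬝ᵥ X k) * y k i) + b * ((τ i - C i ⬝ᵥ Y k) * y k i) := by
        have hck : (a • X + b • Y) k = a • X k + b • Y k := rfl
        rw [hck, dotProduct_add, dotProduct_smul, dotProduct_smul, smul_eq_mul, smul_eq_mul]
        linear_combination (-(τ i * y k i)) * hab
      rw [harg]
      exact gmax_le (R i) (hR i).le ha.le hb.le hab
    have H3le : (∑ i : Fin p, ∑ k : Fin (N + 1),
        (if (C i ⬝ᵥ (a • X + b • Y) k - τ i) * y k i < 0 then (1:ℝ) else 0) * R i *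
            (C i ⬝ᵥ (a • X + b • Y) k - τ i) ^ 2)
          ≤ a * (∑ i : Fin p, ∑ k : Fin (N + 1),
              (if (C i ⬝ᵥ X k - τ i) * y k i < 0 then (1:ℝ) else 0) * R i *
                (C i ⬝ᵥ X k - τ i) ^ 2)
            + b * (∑ i : Fin p, ∑ k : Fin (N + 1),
              (if (C i ⬝ᵥ Y k - τ i) * y k i < 0 then (1:ℝ) else 0) * R i *
                (C i ⬝ᵥ Y k - τ i) ^ 2) := by
      calc _ ≤ ∑ i : Fin p, ∑ k : Fin (N + 1),
          (a * ((if (C i ⬝ᵥ X k - τ i) * y k i < 0 then (1:ℝ) else 0) * R i *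
                (C i ⬝ᵥ X k - τ i) ^ 2)
            + b * ((if (C i ⬝ᵥ Y k - τ i) * y k i < 0 then (1:ℝ) else 0) * R i *
                (C i ⬝ᵥ Y k - τ i) ^ 2)) :=
            Finset.sum_le_sum fun i _ => Finset.sum_le_sum fun k _ => hpen i k
        _ = _ := by
            simp only [Finset.sum_add_distrib, Finset.mul_sum]
    rcases find_strict hXY with h0 | ⟨k0, hkc, hks⟩
    · have H1lt : ((a • X + b • Y) 0 - xbar) ⬝ᵥ P.mulVec ((a • X + b • Y) 0 - xbar)
          < a * ((X 0 - xbar) ⬝ᵥ P.mulVec (X 0 - xbar))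
            + b * ((Y 0 - xbar) ⬝ᵥ P.mulVec (Y 0 - xbar)) := by
        rw [e0]
        exact quad_lt P hP (fun h => h0 (by
          have := congrArg (· + xbar) h
          simpa using this)) ha hb hab
      exact assemble H1lt.le H2le H3le (Or.inl H1lt)
    · have hzne : X k0.succ - A.mulVec (X k0.castSucc) - B.mulVec (u k0)
          ≠ Y k0.succ - A.mulVec (Y k0.castSucc) - B.mulVec (u k0) := by
        rw [hkc]
        intro h
        apply hks
        have := congrArg (· + A.mulVec (Y k0.castSucc) + B.mulVec (u k0)) h
        simpa [sub_add_cancel] using this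
      have H2lt : (∑ k : Fin N,
          ((a • X + b • Y) k.succ - A.mulVec ((a • X + b • Y) k.castSucc) - B.mulVec (u k)) ⬝ᵥ
              Q.mulVec ((a • X + b • Y) k.succ - A.mulVec ((a • X + b • Y) k.castSucc) - B.mulVec (u k)))
            < a * (∑ k : Fin N, (X k.succ - A.mulVec (X k.castSucc) - B.mulVec (u k)) ⬝ᵥ
                  Q.mulVec (X k.succ - A.mulVec (X k.castSucc) - B.mulVec (u k)))
              + b * (∑ k : Fin N, (Y k.succ - A.mulVec (Y k.castSucc) - B.mulVec (u k)) ⬝ᵥ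
                  Q.mulVec (Y k.succ - A.mulVec (Y k.castSucc) - B.mulVec (u k))) := by
        calc _ < ∑ k : Fin N,
            (a * ((X k.succ - A.mulVec (X k.castSucc) - B.mulVec (u k)) ⬝ᵥ
                  Q.mulVec (X k.succ - A.mulVec (X k.castSucc) - B.mulVec (u k)))
              + b * ((Y k.succ - A.mulVec (Y k.castSucc) - B.mulVec (u k)) ⬝ᵥ
                  Q.mulVec (Y k.succ - A.mulVec (Y k.castSucc) - B.mulVec (u k)))) := by
              refine Finset.sum_lt_sum (fun k _ => H2term k) ⟨k0, Finset.mem_univ _, ?_⟩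
              rw [ez k0]
              exact quad_lt Q hQ hzne ha hb hab
          _ = _ := by rw [Finset.sum_add_distrib, ← Finset.mul_sum, ← Finset.mul_sum]
      exact assemble H1le H2le H3le (Or.inr H2lt)
  refine ⟨hsc, ?_⟩
  -- continuity
  have hcont : Continuous f := by
    rw [hfdef]
    apply Continuous.add
    apply Continuous.add
    · exact (cont_quad P).comp ((continuous_apply (0 : Fin (N+1))).sub continuous_const)
    · refine continuous_finset_sum _ fun k _ => ?_
      exact (cont_quad Q).comp
        (((continuous_apply k.succ).sub ((cont_mulVec A).comp (continuous_apply k.castSucc))).sub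
          continuous_const)
    · refine continuous_finset_sum _ fun i _ => continuous_finset_sum _ fun k _ => ?_
      have hrw : (fun X : Fin (N+1) → Fin n → ℝ =>
          (if (C i ⬝ᵥ X k - τ i) * y k i < 0 then (1:ℝ) else 0) * R i *
            (C i ⬝ᵥ X k - τ i) ^ 2)
          = fun X => R i * (max ((τ i - C i ⬝ᵥ X k) * y k i) 0) ^ 2 :=
        funext fun X => pen_eq (hy k i)
      rw [hrw]
      exact continuous_const.mul
        ((((continuous_const.sub ((cont_dot (C i)).comp (continuous_apply k))).mul
          continuous_const).max continuous_const).pow 2)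
  obtain ⟨εP, hεP, hPb⟩ := posdef_bound P hP
  obtain ⟨εQ, hεQ, hQb⟩ := posdef_bound Q hQ
  set ε := min εP εQ with hεdef
  have hε : 0 < ε := lt_min hεP hεQ
  have hpen0 : ∀ X : Fin (N+1) → Fin n → ℝ, 0 ≤ ∑ i : Fin p, ∑ k : Fin (N+1),
      (if (C i ⬝ᵥ X k - τ i) * y k i < 0 then (1:ℝ) else 0) * R i * (C i ⬝ᵥ X k - τ i) ^ 2 :=
    fun X => Finset.sum_nonneg fun i _ => Finset.sum_nonneg fun k _ => pen_nonneg (hR i).le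
  have hQ1 : ∀ (X : Fin (N+1) → Fin n → ℝ) (k : Fin N),
      εQ * ‖X k.succ - A.mulVec (X k.castSucc) - B.mulVec (u k)‖ ^ 2 ≤
        ∑ k : Fin N, (X k.succ - A.mulVec (X k.castSucc) - B.mulVec (u k)) ⬝ᵥ
          Q.mulVec (X k.succ - A.mulVec (X k.castSucc) - B.mulVec (u k)) := by
    intro X k
    refine le_trans (hQb _) ?_
    exact Finset.single_le_sum
      (f := fun k : Fin N => (X k.succ - A.mulVec (X k.castSucc) - B.mulVec (u k)) ⬝ᵥ
        Q.mulVec (X k.succ - A.mulVec (X k.castSucc) - B.mulVec (u k)))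
      (fun j _ => le_trans (by positivity) (hQb _)) (Finset.mem_univ k)
  have hQ0 : ∀ X : Fin (N+1) → Fin n → ℝ,
      0 ≤ ∑ k : Fin N, (X k.succ - A.mulVec (X k.castSucc) - B.mulVec (u k)) ⬝ᵥ
          Q.mulVec (X k.succ - A.mulVec (X k.castSucc) - B.mulVec (u k)) :=
    fun X => Finset.sum_nonneg fun k _ => le_trans (by positivity) (hQb _)
  have hflb0 : ∀ X, ε * ‖X 0 - xbar‖ ^ 2 ≤ f X := by
    intro X
    simp only [hfdef]
    have h1 : ε * ‖X 0 - xbar‖ ^ 2 ≤ εP * ‖X 0 - xbar‖ ^ 2 :=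
      mul_le_mul_of_nonneg_right (min_le_left _ _) (by positivity)
    have h2 := hPb (X 0 - xbar)
    have h3 := hQ0 X
    have h4 := hpen0 X
    linarith
  have hflbQ : ∀ X (k : Fin N),
      ε * ‖X k.succ - A.mulVec (X k.castSucc) - B.mulVec (u k)‖ ^ 2 ≤ f X := by
    intro X k
    simp only [hfdef]
    have h1 : ε * ‖X k.succ - A.mulVec (X k.castSucc) - B.mulVec (u k)‖ ^ 2
        ≤ εQ * ‖X k.succ - A.mulVec (X k.castSucc) - B.mulVec (u k)‖ ^ 2 :=
      mul_le_mul_of_nonneg_right (min_le_right _ _) (by positivity)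
    have h2 := hQ1 X k
    have h3 : 0 ≤ (X 0 - xbar) ⬝ᵥ P.mulVec (X 0 - xbar) := le_trans (by positivity) (hPb _)
    have h4 := hpen0 X
    linarith
  set Acl := LinearMap.toContinuousLinearMap (Matrix.mulVecLin A) with hAcldef
  set α := ‖Acl‖ with hαdef
  have hα0 : 0 ≤ α := norm_nonneg _
  have hαb : ∀ v : Fin n → ℝ, ‖A.mulVec v‖ ≤ α * ‖v‖ := by
    intro v
    have h := Acl.le_opNorm v
    simpa [hAcldef, Matrix.mulVecLin_apply] using h
  set W := ‖xbar‖ + ∑ k : Fin N, ‖B.mulVec (u k)‖ with hWdef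
  have hsumB0 : 0 ≤ ∑ k : Fin N, ‖B.mulVec (u k)‖ :=
    Finset.sum_nonneg fun k _ => norm_nonneg _
  have hW0 : 0 ≤ W := by have := norm_nonneg xbar; rw [hWdef]; linarith
  have hxW : ‖xbar‖ ≤ W := by rw [hWdef]; linarith
  have hBW : ∀ k : Fin N, ‖B.mulVec (u k)‖ ≤ W := by
    intro k
    have h := Finset.single_le_sum (f := fun k : Fin N => ‖B.mulVec (u k)‖)
      (fun j _ => norm_nonneg _) (Finset.mem_univ k)
    have h0 : 0 ≤ ‖xbar‖ := norm_nonneg _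
    rw [hWdef]; linarith
  set F0 := f 0 with hF0def
  set ρ := max 1 (F0 / ε) with hρdef
  have hρ1 : (1:ℝ) ≤ ρ := le_max_left _ _
  have hρ0 : (0:ℝ) ≤ ρ := by linarith
  have hrho : ∀ r : ℝ, 0 ≤ r → ε * r ^ 2 ≤ F0 → r ≤ ρ := by
    intro r hr h
    rcases le_or_gt r 1 with h1 | h1
    · exact h1.trans hρ1
    · have hpos : 0 < ε * (r * (r - 1)) := mul_pos hε (mul_pos (by linarith) (by linarith))
      have hr2 : ε * r ≤ F0 := by nlinarith
      have : r ≤ F0 / ε := (le_div_iff₀ hε).2 (by linarith [mul_comm ε r])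
      exact this.trans (le_max_right _ _)
  set Rbig := (1 + α) ^ N * (W + ρ) with hRbigdef
  have hRbig0 : 0 ≤ Rbig := by
    rw [hRbigdef]
    exact mul_nonneg (pow_nonneg (by linarith) _) (by linarith)
  have hone : ∀ j : ℕ, (1:ℝ) ≤ (1 + α) ^ j := fun j => one_le_pow₀ (by linarith)
  have hev : ∀ᶠ X in Filter.cocompact (Fin (N+1) → Fin n → ℝ), f 0 ≤ f X := by
    rw [Filter.eventually_iff, Filter.mem_cocompact]
    refine ⟨Metric.closedBall 0 Rbig, isCompact_closedBall _ _, ?_⟩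
    intro X hX
    simp only [Set.mem_compl_iff, Metric.mem_closedBall, dist_zero_right, not_le] at hX
    simp only [Set.mem_setOf_eq]
    by_contra hc
    push_neg at hc
    have hXF : f X ≤ F0 := by rw [hF0def]; exact hc.le
    have hres0 : ‖X 0 - xbar‖ ≤ ρ := hrho _ (norm_nonneg _) (le_trans (hflb0 X) hXF)
    have hresk : ∀ k : Fin N, ‖X k.succ - A.mulVec (X k.castSucc) - B.mulVec (u k)‖ ≤ ρ :=
      fun k => hrho _ (norm_nonneg _) (le_trans (hflbQ X k) hXF)
    have hbd : ∀ k : Fin (N+1), ‖X k‖ ≤ (1 + α) ^ (k : ℕ) * (W + ρ) := by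
      intro k
      induction k using Fin.induction with
      | zero =>
        have h1 : ‖X 0‖ ≤ ‖X 0 - xbar‖ + ‖xbar‖ := by
          calc ‖X 0‖ = ‖X 0 - xbar + xbar‖ := by rw [sub_add_cancel]
            _ ≤ _ := norm_add_le _ _
        simpa using le_trans h1 (by linarith : ‖X 0 - xbar‖ + ‖xbar‖ ≤ W + ρ)
      | succ k ih =>
        have hsplit : X k.succ = X k.succ - A.mulVec (X k.castSucc) - B.mulVec (u k)
            + A.mulVec (X k.castSucc) + B.mulVec (u k) := by abel
        have h1 : ‖X k.succ‖ ≤ ‖X k.succ - A.mulVec (X k.castSucc) - B.mulVec (u k)‖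
            + ‖A.mulVec (X k.castSucc)‖ + ‖B.mulVec (u k)‖ := by
          calc ‖X k.succ‖
              = ‖X k.succ - A.mulVec (X k.castSucc) - B.mulVec (u k)
                  + A.mulVec (X k.castSucc) + B.mulVec (u k)‖ := by conv_lhs => rw [hsplit]
            _ ≤ ‖X k.succ - A.mulVec (X k.castSucc) - B.mulVec (u k)
                  + A.mulVec (X k.castSucc)‖ + ‖B.mulVec (u k)‖ := norm_add_le _ _
            _ ≤ _ := by
              have := norm_add_le (X k.succ - A.mulVec (X k.castSucc) - B.mulVec (u k))
                (A.mulVec (X k.castSucc))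
              linarith
        have hihc : ‖X k.castSucc‖ ≤ (1 + α) ^ (k : ℕ) * (W + ρ) := by
          simpa using ih
        have h2 : ‖A.mulVec (X k.castSucc)‖ ≤ α * ((1 + α) ^ (k : ℕ) * (W + ρ)) :=
          le_trans (hαb _) (mul_le_mul_of_nonneg_left hihc hα0)
        have hgoal : ‖X k.succ‖ ≤ (1 + α) ^ ((k : ℕ) + 1) * (W + ρ) := by
          have hps : (1 + α) ^ ((k : ℕ) + 1) = (1 + α) ^ (k : ℕ) * (1 + α) := pow_succ _ _
          have hkey : (0:ℝ) ≤ ((1 + α) ^ (k : ℕ) - 1) * (W + ρ) :=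
            mul_nonneg (by linarith [hone (k : ℕ)]) (by linarith)
          have hr := hresk k
          have hb := hBW k
          rw [hps]
          nlinarith
        simpa using hgoal
    have hXle : ‖X‖ ≤ Rbig := by
      rw [hRbigdef]
      refine (pi_norm_le_iff_of_nonneg (by rw [← hRbigdef]; exact hRbig0)).2 fun k => ?_
      refine (hbd k).trans ?_
      exact mul_le_mul_of_nonneg_right
        (pow_le_pow_right₀ (by linarith) (Nat.lt_succ_iff.mp k.isLt)) (by linarith)
    exact absurd hXle (not_le.2 hX)
  obtain ⟨Xo, hXo⟩ := hcont.exists_forall_le' 0 hev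
  have hXomin : IsMinOn f Set.univ Xo := isMinOn_univ_iff.2 hXo
  exact ⟨Xo, hXomin, fun Z hZ => hsc.eq_of_isMinOn hZ hXomin (Set.mem_univ _) (Set.mem_univ _)⟩
end

section
/- Let z_k^i = C^i x_k + v_k^i with y_k^i = sign-type binary output (y = +1 iff z ≥ τ^i). If k is an up-down switching instant (y_k^i = +1, y_{k+1}^i = -1) for the system x_{k+1} = A x_k + B u_k + w_k, then there exists α ∈ [0,1] such that τ^i = C^i x_k + δ^i_k + η^i_k, where δ^i_k = (1-α)C^i(A - I)x_k + (1-α)C^i B u_k and η^i_k = α v_k^i + (1-α)v_{k+1}^i + (1-α)C^i w_k. -/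
open Matrix

theorem stmt_16 {n m : ℕ}
    (A : Matrix (Fin n) (Fin n) ℝ) (B : Matrix (Fin n) (Fin m) ℝ)
    (C : Fin n → ℝ) (τ : ℝ)
    (xk xk1 w : Fin n → ℝ) (u : Fin m → ℝ) (vk vk1 : ℝ)
    (hdyn : xk1 = A.mulVec xk + B.mulVec u + w)
    (hyk : C ⬝ᵥ xk + vk ≥ τ)
    (hyk1 : C ⬝ᵥ xk1 + vk1 < τ) :
    ∃ α ∈ Set.Icc (0 : ℝ) 1,
      τ = C ⬝ᵥ xk
        + ((1 - α) * (C ⬝ᵥ (A - 1).mulVec xk) + (1 - α) * (C ⬝ᵥ B.mulVec u))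
        + (α * vk + (1 - α) * vk1 + (1 - α) * (C ⬝ᵥ w)) := by
  set z0 := C ⬝ᵥ xk + vk with hz0
  set z1 := C ⬝ᵥ xk1 + vk1 with hz1
  have hlt : z1 < z0 := lt_of_lt_of_le hyk1 hyk
  have hd : (0:ℝ) < z0 - z1 := sub_pos.mpr hlt
  refine ⟨(τ - z1) / (z0 - z1), ⟨div_nonneg (by linarith) hd.le,
    (div_le_one hd).mpr (by linarith)⟩, ?_⟩
  set α := (τ - z1) / (z0 - z1) with hα
  have hkey : α * z0 + (1 - α) * z1 = τ := by
    have h' : α * (z0 - z1) = τ - z1 := div_mul_cancel₀ _ hd.ne'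
    linear_combination h'
  have hsub : (A - 1).mulVec xk = A.mulVec xk - xk := by
    simp [sub_mulVec]
  rw [hsub, hdyn] at *
  simp only [dotProduct_add, dotProduct_sub] at *
  have e0 : z0 = C ⬝ᵥ xk + vk := rfl
  rw [e0, hz1] at hkey
  linear_combination -hkey
end
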